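/- arXiv:2308.16136 — 3 statements merged into one kernel-verified Lean document; each statement's English description precedes it below -/
import Mathlib

section
/- Let Γ be a finitely generated group acting by homeomorphisms on a compact metrizable topological space X. Then there exists a metric d on X inducing the given topology of X such that for every γ ∈ Γ, the map x ↦ γ·x is bi-Lipschitz with respect to d (i.e., Lipschitz with a Lipschitz inverse). -/
open scoped Pointwise

namespace FGBiLipAux

variable {Γ X : Type*} [Group Γ] [DecidableEq Γ] [MetricSpace X] [MulAction Γ X]

noncomputable def rho (x y : X) : ℝ := min (dist x y) 1

lemma rho_nonneg (x y : X) : 0 ≤ rho x y := le_min dist_nonneg zero_le_one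

lemma rho_le_one (x y : X) : rho x y ≤ 1 := min_le_right _ _

lemma rho_comm (x y : X) : rho x y = rho y x := by rw [rho, rho, dist_comm]

lemma rho_self (x : X) : rho x x = 0 := by simp [rho]

lemma rho_triangle (x y z : X) : rho x z ≤ rho x y + rho y z := by
  rcases le_total (dist x y) 1 with h1 | h1
  · rcases le_total (dist y z) 1 with h2 | h2
    · have := dist_triangle x y z
      have e1 : rho x y = dist x y := min_eq_left h1
      have e2 : rho y z = dist y z := min_eq_left h2
      have : rho x z ≤ dist x z := min_le_left _ _
      linarith
    · have e2 : rho y z = 1 := min_eq_right h2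
      have := rho_le_one x z
      have := rho_nonneg x y
      linarith
  · have e1 : rho x y = 1 := min_eq_right h1
    have := rho_le_one x z
    have := rho_nonneg y z
    linarith

lemma rho_eq_zero (x y : X) (h : rho x y = 0) : x = y := by
  rw [rho] at h
  rcases min_eq_iff.mp h with ⟨h1, _⟩ | ⟨h1, _⟩
  · exact dist_eq_zero.mp h1
  · norm_num at h1

variable (T : Finset Γ) (hT : (1 : Γ) ∈ T)

noncomputable def F (n : ℕ) (p : X × X) : ℝ :=
  (T ^ n).sup' ⟨1, Finset.one_mem_pow hT⟩ fun γ => rho (γ • p.1) (γ • p.2)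

lemma le_F (n : ℕ) {γ : Γ} (hγ : γ ∈ T ^ n) (p : X × X) :
    rho (γ • p.1) (γ • p.2) ≤ F T hT n p :=
  Finset.le_sup' (fun γ : Γ => rho (γ • p.1) (γ • p.2)) hγ

lemma F_le (n : ℕ) (p : X × X) {a : ℝ}
    (h : ∀ γ ∈ T ^ n, rho (γ • p.1) (γ • p.2) ≤ a) : F T hT n p ≤ a :=
  Finset.sup'_le _ _ h

lemma F_nonneg (n : ℕ) (p : X × X) : 0 ≤ F T hT n p :=
  le_trans (rho_nonneg _ _) (le_F T hT n (Finset.one_mem_pow hT) p)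

lemma F_le_one (n : ℕ) (p : X × X) : F T hT n p ≤ 1 :=
  F_le T hT n p fun _ _ => rho_le_one _ _

lemma F_comm (n : ℕ) (x y : X) : F T hT n (x, y) = F T hT n (y, x) := by
  unfold F
  congr 1
  ext γ
  exact rho_comm _ _

lemma F_self (n : ℕ) (x : X) : F T hT n (x, x) = 0 :=
  le_antisymm (F_le T hT n (x, x) fun _ _ => le_of_eq (rho_self _)) (F_nonneg T hT n _)

lemma F_zero (x y : X) : F T hT 0 (x, y) = rho x y := by
  refine le_antisymm (F_le T hT 0 (x, y) fun γ hγ => ?_) ?_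
  · rw [pow_zero, Finset.mem_one] at hγ
    subst hγ
    simp
  · have := le_F T hT 0 (Finset.one_mem_pow hT) (x, y)
    simpa using this

lemma F_triangle (n : ℕ) (x y z : X) :
    F T hT n (x, z) ≤ F T hT n (x, y) + F T hT n (y, z) := by
  refine F_le T hT n (x, z) fun γ hγ => ?_
  calc rho (γ • x) (γ • z) ≤ rho (γ • x) (γ • y) + rho (γ • y) (γ • z) := rho_triangle _ _ _
    _ ≤ F T hT n (x, y) + F T hT n (y, z) :=
        add_le_add (le_F T hT n hγ (x, y)) (le_F T hT n hγ (y, z))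

lemma F_smul_le {s : Γ} (hs : s ∈ T) (n : ℕ) (x y : X) :
    F T hT n (s • x, s • y) ≤ F T hT (n + 1) (x, y) := by
  refine F_le T hT n (s • x, s • y) fun γ hγ => ?_
  have hmem : γ * s ∈ T ^ (n + 1) := by
    rw [pow_succ]; exact Finset.mul_mem_mul hγ hs
  have := le_F T hT (n + 1) hmem (x, y)
  simpa [mul_smul] using this

noncomputable def D (p : X × X) : ℝ := ∑' n : ℕ, (1 / 2 : ℝ) ^ n * F T hT n p

lemma summable_term (p : X × X) : Summable fun n : ℕ => (1 / 2 : ℝ) ^ n * F T hT n p := by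
  refine Summable.of_nonneg_of_le
    (fun n => mul_nonneg (by positivity) (F_nonneg T hT n p))
    (fun n => ?_) (summable_geometric_of_lt_one (r := 1 / 2) (by norm_num) (by norm_num))
  calc (1 / 2 : ℝ) ^ n * F T hT n p ≤ (1 / 2 : ℝ) ^ n * 1 :=
        mul_le_mul_of_nonneg_left (F_le_one T hT n p) (by positivity)
    _ = (1 / 2 : ℝ) ^ n := mul_one _

lemma D_nonneg (p : X × X) : 0 ≤ D T hT p :=
  tsum_nonneg fun n => mul_nonneg (by positivity) (F_nonneg T hT n p)

lemma D_self (x : X) : D T hT (x, x) = 0 := by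
  unfold D
  simp [F_self T hT]

lemma D_comm (x y : X) : D T hT (x, y) = D T hT (y, x) := by
  unfold D
  congr 1
  ext n
  rw [F_comm]

lemma rho_le_D (x y : X) : rho x y ≤ D T hT (x, y) := by
  have h := Summable.le_tsum (summable_term T hT (x, y)) 0
    (fun n _ => mul_nonneg (by positivity) (F_nonneg T hT n _))
  rw [pow_zero, one_mul, F_zero T hT] at h
  exact h

lemma D_triangle (x y z : X) : D T hT (x, z) ≤ D T hT (x, y) + D T hT (y, z) := by
  unfold D
  rw [← Summable.tsum_add (summable_term T hT (x, y)) (summable_term T hT (y, z))]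
  refine Summable.tsum_le_tsum (fun n => ?_) (summable_term T hT (x, z))
    ((summable_term T hT (x, y)).add (summable_term T hT (y, z)))
  rw [← mul_add]
  exact mul_le_mul_of_nonneg_left (F_triangle T hT n x y z) (by positivity)

lemma summable_shift (x y : X) :
    Summable fun n : ℕ => (1 / 2 : ℝ) ^ n * F T hT (n + 1) (x, y) := by
  refine Summable.of_nonneg_of_le
    (fun n => mul_nonneg (by positivity) (F_nonneg T hT _ _))
    (fun n => ?_) (summable_geometric_of_lt_one (r := 1 / 2) (by norm_num) (by norm_num))
  calc (1 / 2 : ℝ) ^ n * F T hT (n+1) (x,y) ≤ (1 / 2 : ℝ) ^ n * 1 :=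
        mul_le_mul_of_nonneg_left (F_le_one T hT _ _) (by positivity)
    _ = (1 / 2 : ℝ) ^ n := mul_one _

lemma D_smul_le {s : Γ} (hs : s ∈ T) (x y : X) :
    D T hT (s • x, s • y) ≤ 2 * D T hT (x, y) := by
  have h1 : D T hT (s • x, s • y) ≤ ∑' n : ℕ, (1 / 2 : ℝ) ^ n * F T hT (n + 1) (x, y) := by
    unfold D
    refine Summable.tsum_le_tsum (fun n => ?_) (summable_term T hT _) (summable_shift T hT x y)
    exact mul_le_mul_of_nonneg_left (F_smul_le T hT hs n x y) (by positivity)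
  have h2 : ∑' n : ℕ, (1 / 2 : ℝ) ^ n * F T hT (n + 1) (x, y)
      = 2 * ∑' n : ℕ, (1 / 2 : ℝ) ^ (n + 1) * F T hT (n + 1) (x, y) := by
    rw [← tsum_mul_left]
    congr 1
    ext n
    ring
  have h3 : ∑' n : ℕ, (1 / 2 : ℝ) ^ (n + 1) * F T hT (n + 1) (x, y) ≤ D T hT (x, y) := by
    have hinj : Function.Injective (fun n : ℕ => n + 1) := fun a b h => by simpa using h
    refine Summable.tsum_le_tsum_of_inj (fun n => n + 1) hinj
      (fun n _ => mul_nonneg (by positivity) (F_nonneg T hT _ _)) (fun n => le_rfl)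
      ?_ (summable_term T hT (x, y))
    exact ((summable_term T hT (x, y)).comp_injective hinj)
  calc D T hT (s • x, s • y) ≤ _ := h1
    _ = _ := h2
    _ ≤ 2 * D T hT (x, y) := by linarith [h3]

lemma D_continuous (hc : ∀ γ : Γ, Continuous fun x : X => γ • x) :
    Continuous (D T hT : X × X → ℝ) := by
  refine continuous_tsum (f := fun n p => (1 / 2 : ℝ) ^ n * F T hT n p)
    (u := fun n => (1 / 2 : ℝ) ^ n) (fun n => ?_)
    (summable_geometric_of_lt_one (r := 1 / 2) (by norm_num) (by norm_num)) (fun n p => ?_)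
  · refine continuous_const.mul ?_
    refine Continuous.finset_sup'_apply ⟨1, Finset.one_mem_pow hT⟩ (fun γ _ => ?_)
    exact (Continuous.dist ((hc γ).comp continuous_fst) ((hc γ).comp continuous_snd)).min
      continuous_const
  · rw [Real.norm_eq_abs, abs_of_nonneg (mul_nonneg (by positivity) (F_nonneg T hT n p))]
    calc (1 / 2 : ℝ) ^ n * F T hT n p ≤ (1 / 2 : ℝ) ^ n * 1 :=
          mul_le_mul_of_nonneg_left (F_le_one T hT n p) (by positivity)
      _ = (1 / 2 : ℝ) ^ n := mul_one _

end FGBiLipAux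

/-- **Theorem (Hamenstädt).** Let `Γ` be a finitely generated group acting by
homeomorphisms on a compact metrizable space `X`. Then there is a metric on `X`
defining the original topology such that the action is by bi-Lipschitz
transformations. -/
theorem fg_action_biLipschitz_metric {Γ X : Type*} [Group Γ] [Group.FG Γ]
    [tX : TopologicalSpace X] [CompactSpace X] [TopologicalSpace.MetrizableSpace X]
    [Nonempty X] [MulAction Γ X]
    (hcont : ∀ γ : Γ, Continuous fun x : X => γ • x) :
    ∃ m : MetricSpace X,
      m.toUniformSpace.toTopologicalSpace = tX ∧
      ∀ γ : Γ, ∃ C : ℝ, 1 ≤ C ∧ ∀ x y : X,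
        C⁻¹ * m.dist x y ≤ m.dist (γ • x) (γ • y) ∧
        m.dist (γ • x) (γ • y) ≤ C * m.dist x y := by
  classical
  letI m₀ : MetricSpace X := TopologicalSpace.metrizableSpaceMetric X
  obtain ⟨S₀, hS₀, hfin⟩ := (Group.fg_iff (G := Γ)).mp inferInstance
  set T : Finset Γ := insert (1 : Γ) (hfin.toFinset ∪ hfin.toFinset.image (·⁻¹)) with hTdef
  have hT1 : (1 : Γ) ∈ T := Finset.mem_insert_self _ _
  set d : X → X → ℝ := fun x y => FGBiLipAux.D T hT1 (x, y) with hd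
  have dcont : Continuous fun p : X × X => FGBiLipAux.D T hT1 p :=
    FGBiLipAux.D_continuous T hT1 hcont
  have hrho_le : ∀ x y : X, FGBiLipAux.rho x y ≤ d x y := fun x y =>
    FGBiLipAux.rho_le_D T hT1 x y
  -- the open-sets characterization
  have H : ∀ s : Set X, IsOpen s ↔ ∀ x ∈ s, ∃ ε > 0, ∀ y, d x y < ε → y ∈ s := by
    intro s
    constructor
    · intro hs x hx
      obtain ⟨ε, hε, hball⟩ := Metric.isOpen_iff.mp hs x hx
      refine ⟨min ε 1, lt_min hε one_pos, fun y hy => ?_⟩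
      apply hball
      rw [Metric.mem_ball, dist_comm]
      have h1 : min (dist x y) 1 < min ε 1 := lt_of_le_of_lt (hrho_le x y) hy
      rcases le_or_gt (dist x y) 1 with h | h
      · rw [min_eq_left h] at h1
        exact lt_of_lt_of_le h1 (min_le_left _ _)
      · rw [min_eq_right h.le] at h1
        exact absurd (lt_of_lt_of_le h1 (min_le_right _ _)) (lt_irrefl _)
    · intro h
      refine isOpen_iff_mem_nhds.mpr fun x hx => ?_
      obtain ⟨ε, hε, hball⟩ := h x hx
      have hU : IsOpen {y : X | d x y < ε} := by
        have : Continuous fun y : X => d x y :=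
          dcont.comp (continuous_const.prodMk continuous_id)
        exact isOpen_lt this continuous_const
      have hxU : x ∈ {y : X | d x y < ε} := by
        simp only [Set.mem_setOf_eq, hd]
        rw [FGBiLipAux.D_self T hT1 x]
        exact hε
      exact Filter.mem_of_superset (hU.mem_nhds hxU) hball
  refine ⟨MetricSpace.ofDistTopology d
      (fun x => FGBiLipAux.D_self T hT1 x)
      (fun x y => FGBiLipAux.D_comm T hT1 x y)
      (fun x y z => FGBiLipAux.D_triangle T hT1 x y z)
      H
      (fun x y h => FGBiLipAux.rho_eq_zero x y
        (le_antisymm (h ▸ hrho_le x y) (FGBiLipAux.rho_nonneg x y))), rfl, ?_⟩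
  -- bi-Lipschitz for every group element
  intro γ
  have hγtop : γ ∈ Subgroup.closure S₀ := hS₀ ▸ Subgroup.mem_top γ
  show ∃ C : ℝ, 1 ≤ C ∧ ∀ x y : X,
      C⁻¹ * d x y ≤ d (γ • x) (γ • y) ∧ d (γ • x) (γ • y) ≤ C * d x y
  induction hγtop using Subgroup.closure_induction with
  | mem s hs =>
    have hsT : s ∈ T :=
      Finset.mem_insert_of_mem (Finset.mem_union_left _ (hfin.mem_toFinset.mpr hs))
    have hsinvT : s⁻¹ ∈ T :=
      Finset.mem_insert_of_mem (Finset.mem_union_right _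
        (Finset.mem_image_of_mem _ (hfin.mem_toFinset.mpr hs)))
    refine ⟨2, one_le_two, fun x y => ?_⟩
    have hup : d (s • x) (s • y) ≤ 2 * d x y := FGBiLipAux.D_smul_le T hT1 hsT x y
    have hlow : d x y ≤ 2 * d (s • x) (s • y) := by
      have h := FGBiLipAux.D_smul_le T hT1 hsinvT (s • x) (s • y)
      rwa [inv_smul_smul, inv_smul_smul] at h
    constructor
    · rw [show ((2 : ℝ)⁻¹ = 1 / 2) by norm_num]
      linarith
    · exact hup
  | one =>
    refine ⟨1, le_rfl, fun x y => ?_⟩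
    simp only [one_smul, inv_one, one_mul]
    exact ⟨le_rfl, le_rfl⟩
  | mul a b _ _ iha ihb =>
    obtain ⟨C₁, hC₁, h₁⟩ := iha
    obtain ⟨C₂, hC₂, h₂⟩ := ihb
    have hC₁0 : (0 : ℝ) < C₁ := lt_of_lt_of_le one_pos hC₁
    have hC₂0 : (0 : ℝ) < C₂ := lt_of_lt_of_le one_pos hC₂
    refine ⟨C₁ * C₂, by nlinarith, fun x y => ?_⟩
    have hu₁ := (h₁ (b • x) (b • y)).2
    have hl₁ := (h₁ (b • x) (b • y)).1
    have hu₂ := (h₂ x y).2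
    have hl₂ := (h₂ x y).1
    constructor
    · calc (C₁ * C₂)⁻¹ * d x y = C₁⁻¹ * (C₂⁻¹ * d x y) := by rw [mul_inv]; ring
        _ ≤ C₁⁻¹ * d (b • x) (b • y) :=
            mul_le_mul_of_nonneg_left hl₂ (inv_nonneg.mpr hC₁0.le)
        _ ≤ d (a • b • x) (a • b • y) := hl₁
        _ = d ((a * b) • x) ((a * b) • y) := by rw [mul_smul, mul_smul]
    · calc d ((a * b) • x) ((a * b) • y) = d (a • b • x) (a • b • y) := by
            rw [mul_smul, mul_smul]
        _ ≤ C₁ * d (b • x) (b • y) := hu₁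
        _ ≤ C₁ * (C₂ * d x y) := mul_le_mul_of_nonneg_left hu₂ hC₁0.le
        _ = C₁ * C₂ * d x y := by ring
  | inv a _ ih =>
    obtain ⟨C, hC, h⟩ := ih
    have hC0 : (0 : ℝ) < C := lt_of_lt_of_le one_pos hC
    refine ⟨C, hC, fun x y => ?_⟩
    have h1 := (h (a⁻¹ • x) (a⁻¹ • y)).1
    have h2 := (h (a⁻¹ • x) (a⁻¹ • y)).2
    rw [smul_inv_smul, smul_inv_smul] at h1 h2
    constructor
    · calc C⁻¹ * d x y ≤ C⁻¹ * (C * d (a⁻¹ • x) (a⁻¹ • y)) :=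
            mul_le_mul_of_nonneg_left h2 (inv_nonneg.mpr hC0.le)
        _ = d (a⁻¹ • x) (a⁻¹ • y) := by field_simp
    · calc d (a⁻¹ • x) (a⁻¹ • y) = C * (C⁻¹ * d (a⁻¹ • x) (a⁻¹ • y)) := by field_simp
        _ ≤ C * d x y := mul_le_mul_of_nonneg_left h1 hC0.le
end

section
/- With Γ, S, d_S, (X, δ̂), s, and the metric δ_e as below, every ψ ∈ Γ acts on (X, δ_e) as a bi-Lipschitz transformation: for all x, y ∈ X, e^{−s·|ψ|_S} · δ_e(x,y) ≤ δ_e(ψ·x, ψ·y) ≤ e^{s·|ψ|_S} · δ_e(x,y). -/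
/-- The word length of `g` with respect to a generating set `S`. -/
noncomputable def wordLength {Γ : Type*} [Group Γ] (S : Set Γ) (g : Γ) : ℕ :=
  sInf {n : ℕ | ∃ l : List Γ, (∀ x ∈ l, x ∈ S) ∧ l.length = n ∧ l.prod = g}

/-- The distance `δ_p(x,y) = ∑_{ψ ∈ Γ} e^{-s d_S(p,ψ)} δ̂(ψ⁻¹ x, ψ⁻¹ y)`. -/
noncomputable def deltaP {Γ X : Type*} [Group Γ] [MetricSpace X] [MulAction Γ X]
    (S : Set Γ) (s : ℝ) (p : Γ) (x y : X) : ℝ :=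
  ∑' ψ : Γ, Real.exp (-s * (wordLength S (p⁻¹ * ψ) : ℝ)) * dist (ψ⁻¹ • x) (ψ⁻¹ • y)

lemma exists_rep {Γ : Type*} [Group Γ] (S : Finset Γ) (hsym : ∀ x ∈ S, x⁻¹ ∈ S)
    (hgen : Subgroup.closure (S : Set Γ) = ⊤) (g : Γ) :
    ∃ l : List Γ, (∀ x ∈ l, x ∈ (S : Set Γ)) ∧ l.prod = g := by
  have hg : g ∈ Subgroup.closure (S : Set Γ) := by rw [hgen]; trivial
  induction hg using Subgroup.closure_induction with
  | mem x hx => exact ⟨[x], by simpa using hx, by simp⟩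
  | one => exact ⟨[], by simp, by simp⟩
  | mul x y hx hy ihx ihy =>
    obtain ⟨l₁, h₁, h₁'⟩ := ihx
    obtain ⟨l₂, h₂, h₂'⟩ := ihy
    refine ⟨l₁ ++ l₂, ?_, by simp [h₁', h₂']⟩
    intro a ha
    rcases List.mem_append.1 ha with h | h
    exacts [h₁ a h, h₂ a h]
  | inv x hx ihx =>
    obtain ⟨l, h, h'⟩ := ihx
    refine ⟨(l.map fun a => a⁻¹).reverse, ?_, ?_⟩
    · intro a ha
      simp only [List.mem_reverse, List.mem_map] at ha
      obtain ⟨b, hb, rfl⟩ := ha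
      exact hsym b (h b hb)
    · rw [← List.prod_inv_reverse, h']

lemma wordLength_nonempty {Γ : Type*} [Group Γ] (S : Finset Γ) (hsym : ∀ x ∈ S, x⁻¹ ∈ S)
    (hgen : Subgroup.closure (S : Set Γ) = ⊤) (g : Γ) :
    {n : ℕ | ∃ l : List Γ, (∀ x ∈ l, x ∈ (S : Set Γ)) ∧ l.length = n ∧ l.prod = g}.Nonempty := by
  obtain ⟨l, h, h'⟩ := exists_rep S hsym hgen g
  exact ⟨l.length, l, h, rfl, h'⟩

lemma wordLength_spec {Γ : Type*} [Group Γ] (S : Finset Γ) (hsym : ∀ x ∈ S, x⁻¹ ∈ S)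
    (hgen : Subgroup.closure (S : Set Γ) = ⊤) (g : Γ) :
    ∃ l : List Γ, (∀ x ∈ l, x ∈ (S : Set Γ)) ∧ l.length = wordLength (S : Set Γ) g ∧
      l.prod = g :=
  Nat.sInf_mem (wordLength_nonempty S hsym hgen g)

lemma wordLength_le {Γ : Type*} [Group Γ] (S : Finset Γ) {g : Γ} {l : List Γ}
    (h : ∀ x ∈ l, x ∈ (S : Set Γ)) (h' : l.prod = g) :
    wordLength (S : Set Γ) g ≤ l.length :=
  Nat.sInf_le ⟨l, h, rfl, h'⟩

lemma wordLength_mul {Γ : Type*} [Group Γ] (S : Finset Γ) (hsym : ∀ x ∈ S, x⁻¹ ∈ S)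
    (hgen : Subgroup.closure (S : Set Γ) = ⊤) (a b : Γ) :
    wordLength (S : Set Γ) (a * b) ≤ wordLength (S : Set Γ) a + wordLength (S : Set Γ) b := by
  obtain ⟨l₁, h₁, hl₁, h₁'⟩ := wordLength_spec S hsym hgen a
  obtain ⟨l₂, h₂, hl₂, h₂'⟩ := wordLength_spec S hsym hgen b
  have hmem : ∀ x ∈ l₁ ++ l₂, x ∈ (S : Set Γ) := by
    intro x hx
    rcases List.mem_append.1 hx with h | h
    exacts [h₁ x h, h₂ x h]
  have := wordLength_le S hmem (by simp [h₁', h₂'] : (l₁ ++ l₂).prod = a * b)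
  simpa [hl₁, hl₂] using this

lemma wordLength_inv_le {Γ : Type*} [Group Γ] (S : Finset Γ) (hsym : ∀ x ∈ S, x⁻¹ ∈ S)
    (hgen : Subgroup.closure (S : Set Γ) = ⊤) (a : Γ) :
    wordLength (S : Set Γ) a⁻¹ ≤ wordLength (S : Set Γ) a := by
  obtain ⟨l, h, hl, h'⟩ := wordLength_spec S hsym hgen a
  calc wordLength (S : Set Γ) a⁻¹ ≤ ((l.map fun x => x⁻¹).reverse).length := by
        refine wordLength_le S ?_ (by rw [← List.prod_inv_reverse, h'])
        intro x hx
        simp only [List.mem_reverse, List.mem_map] at hx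
        obtain ⟨b, hb, rfl⟩ := hx
        exact hsym b (h b hb)
    _ = l.length := by simp
    _ = _ := hl

lemma wordLength_inv {Γ : Type*} [Group Γ] (S : Finset Γ) (hsym : ∀ x ∈ S, x⁻¹ ∈ S)
    (hgen : Subgroup.closure (S : Set Γ) = ⊤) (a : Γ) :
    wordLength (S : Set Γ) a⁻¹ = wordLength (S : Set Γ) a :=
  le_antisymm (wordLength_inv_le S hsym hgen a)
    (by simpa using wordLength_inv_le S hsym hgen a⁻¹)

/-- Every `ψ ∈ Γ` acts on `(X, δ_e)` as a bi-Lipschitz transformation: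
`e^{-s |ψ|_S} δ_e(x,y) ≤ δ_e(ψ x, ψ y) ≤ e^{s |ψ|_S} δ_e(x,y)`. -/
theorem deltaE_action_biLipschitz {Γ X : Type*} [Group Γ]
    (S : Finset Γ) (hsym : ∀ x ∈ S, x⁻¹ ∈ S)
    (hgen : Subgroup.closure (S : Set Γ) = ⊤)
    [MetricSpace X] [CompactSpace X] [MulAction Γ X]
    (hcont : ∀ γ : Γ, Continuous fun x : X => γ • x)
    (s : ℝ) (hs : 0 < s)
    (hsum : Summable fun ψ : Γ => Real.exp (-s * (wordLength (S : Set Γ) ψ : ℝ))) :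
    ∀ (ψ : Γ) (x y : X),
      Real.exp (-s * (wordLength (S : Set Γ) ψ : ℝ)) * deltaP (S : Set Γ) s 1 x y ≤
        deltaP (S : Set Γ) s 1 (ψ • x) (ψ • y) ∧
      deltaP (S : Set Γ) s 1 (ψ • x) (ψ • y) ≤
        Real.exp (s * (wordLength (S : Set Γ) ψ : ℝ)) * deltaP (S : Set Γ) s 1 x y := by
  intro ψ x y
  -- distance bound from compactness
  obtain ⟨C, hC⟩ := (Metric.isBounded_iff.1 (isCompact_univ : IsCompact (Set.univ : Set X)).isBounded)
  have hCb : ∀ a b : X, dist a b ≤ C := fun a b =>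
    hC (Set.mem_univ a) (Set.mem_univ b)
  -- reindexing
  have key : deltaP (S : Set Γ) s 1 (ψ • x) (ψ • y) =
      ∑' χ : Γ, Real.exp (-s * (wordLength (S : Set Γ) (ψ * χ) : ℝ)) *
        dist (χ⁻¹ • x) (χ⁻¹ • y) := by
    rw [deltaP, ← Equiv.tsum_eq (Equiv.mulLeft ψ)]
    apply tsum_congr
    intro χ
    simp only [Equiv.coe_mulLeft, inv_one, one_mul, mul_inv_rev]
    rw [mul_smul, mul_smul, inv_smul_smul, inv_smul_smul]
  -- termwise estimates
  have hmulle : ∀ χ : Γ, (wordLength (S : Set Γ) (ψ * χ) : ℝ) ≤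
      wordLength (S : Set Γ) ψ + wordLength (S : Set Γ) χ := by
    intro χ; exact_mod_cast wordLength_mul S hsym hgen ψ χ
  have hmulge : ∀ χ : Γ, (wordLength (S : Set Γ) χ : ℝ) ≤
      wordLength (S : Set Γ) ψ + wordLength (S : Set Γ) (ψ * χ) := by
    intro χ
    have : wordLength (S : Set Γ) χ ≤
        wordLength (S : Set Γ) ψ⁻¹ + wordLength (S : Set Γ) (ψ * χ) := by
      simpa [mul_assoc] using wordLength_mul S hsym hgen ψ⁻¹ (ψ * χ)
    rw [wordLength_inv S hsym hgen] at this
    exact_mod_cast this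
  have hexp_lower : ∀ χ : Γ,
      Real.exp (-s * (wordLength (S : Set Γ) ψ : ℝ)) *
        Real.exp (-s * (wordLength (S : Set Γ) χ : ℝ)) ≤
      Real.exp (-s * (wordLength (S : Set Γ) (ψ * χ) : ℝ)) := by
    intro χ
    rw [← Real.exp_add]
    apply Real.exp_le_exp.2
    nlinarith [hmulle χ]
  have hexp_upper : ∀ χ : Γ,
      Real.exp (-s * (wordLength (S : Set Γ) (ψ * χ) : ℝ)) ≤
      Real.exp (s * (wordLength (S : Set Γ) ψ : ℝ)) *
        Real.exp (-s * (wordLength (S : Set Γ) χ : ℝ)) := by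
    intro χ
    rw [← Real.exp_add]
    apply Real.exp_le_exp.2
    nlinarith [hmulge χ]
  -- summability
  have hd : ∀ χ : Γ, 0 ≤ dist (χ⁻¹ • x) (χ⁻¹ • y) := fun χ => dist_nonneg
  have hsumg : Summable fun χ : Γ =>
      Real.exp (-s * (wordLength (S : Set Γ) χ : ℝ)) * dist (χ⁻¹ • x) (χ⁻¹ • y) := by
    apply Summable.of_nonneg_of_le (fun χ => mul_nonneg (Real.exp_pos _).le (hd χ))
      (fun χ => ?_) (hsum.mul_right C)
    exact mul_le_mul_of_nonneg_left (hCb _ _) (Real.exp_pos _).le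
  have hsumf : Summable fun χ : Γ =>
      Real.exp (-s * (wordLength (S : Set Γ) (ψ * χ) : ℝ)) * dist (χ⁻¹ • x) (χ⁻¹ • y) := by
    apply Summable.of_nonneg_of_le (fun χ => mul_nonneg (Real.exp_pos _).le (hd χ))
      (fun χ => ?_) ((hsumg.mul_left (Real.exp (s * (wordLength (S : Set Γ) ψ : ℝ)))))
    rw [← mul_assoc]
    exact mul_le_mul_of_nonneg_right (hexp_upper χ) (hd χ)
  have hde : deltaP (S : Set Γ) s 1 x y =
      ∑' χ : Γ, Real.exp (-s * (wordLength (S : Set Γ) χ : ℝ)) *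
        dist (χ⁻¹ • x) (χ⁻¹ • y) := by
    unfold deltaP; simp
  constructor
  · rw [key, hde, ← tsum_mul_left]
    apply Summable.tsum_le_tsum _ (hsumg.mul_left _) hsumf
    intro χ
    rw [← mul_assoc]
    exact mul_le_mul_of_nonneg_right (hexp_lower χ) (hd χ)
  · rw [key, hde, ← tsum_mul_left]
    apply Summable.tsum_le_tsum _ hsumf (hsumg.mul_left _)
    intro χ
    rw [← mul_assoc]
    exact mul_le_mul_of_nonneg_right (hexp_upper χ) (hd χ)
end

section
/- With Γ, S, d_S, (X, δ̂), s, and the metric δ_e as below, the metric δ_e induces the same topology on X as δ̂. Moreover δ_e(x,y) ≥ δ̂(x,y) for all x,y ∈ X, so the identity map (X, δ_e) → (X, δ̂) is 1-Lipschitz. -/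
lemma wordLength_one {Γ : Type*} [Group Γ] (S : Set Γ) : wordLength S 1 = 0 := by
  apply Nat.sInf_eq_zero.mpr
  exact Or.inl ⟨[], by simp⟩

/-- The metric `δ_e` dominates `δ̂` (so the identity `(X,δ_e) → (X,δ̂)` is
`1`-Lipschitz) and induces the same topology on `X` as `δ̂`: the identity map
is continuous in both directions, expressed in `ε`-`δ` form. -/
theorem deltaE_same_topology {Γ X : Type*} [Group Γ]
    (S : Finset Γ) (hsym : ∀ x ∈ S, x⁻¹ ∈ S)
    (hgen : Subgroup.closure (S : Set Γ) = ⊤)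
    [MetricSpace X] [CompactSpace X] [MulAction Γ X]
    (hcont : ∀ γ : Γ, Continuous fun x : X => γ • x)
    (s : ℝ) (hs : 0 < s)
    (hsum : Summable fun ψ : Γ => Real.exp (-s * (wordLength (S : Set Γ) ψ : ℝ))) :
    (∀ x y : X, dist x y ≤ deltaP (S : Set Γ) s 1 x y) ∧
    (∀ (x : X) (ε : ℝ), 0 < ε → ∃ r > 0, ∀ y : X,
      dist x y < r → deltaP (S : Set Γ) s 1 x y < ε) ∧
    (∀ (x : X) (ε : ℝ), 0 < ε → ∃ r > 0, ∀ y : X,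
      deltaP (S : Set Γ) s 1 x y < r → dist x y < ε) := by
  classical
  set f : Γ → ℝ := fun ψ => Real.exp (-s * (wordLength (S : Set Γ) ψ : ℝ)) with hf
  have hf1 : f 1 = 1 := by simp [hf, wordLength_one]
  have hfpos : ∀ ψ, 0 < f ψ := fun ψ => Real.exp_pos _
  set D : ℝ := Metric.diam (Set.univ : Set X) with hDdef
  have hD : ∀ x y : X, dist x y ≤ D := fun x y =>
    Metric.dist_le_diam_of_mem isCompact_univ.isBounded (Set.mem_univ x) (Set.mem_univ y)
  have hsumD : Summable (fun ψ => f ψ * D) := hsum.mul_right D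
  have hsumg : ∀ x y : X, Summable (fun ψ => f ψ * dist (ψ⁻¹ • x) (ψ⁻¹ • y)) := by
    intro x y
    refine Summable.of_nonneg_of_le (fun ψ => by positivity) (fun ψ => ?_) hsumD
    exact mul_le_mul_of_nonneg_left (hD _ _) (hfpos ψ).le
  have hdp : ∀ x y : X, deltaP (S : Set Γ) s 1 x y
      = ∑' ψ : Γ, f ψ * dist (ψ⁻¹ • x) (ψ⁻¹ • y) := by
    intro x y; simp [deltaP, hf]
  have h1 : ∀ x y : X, dist x y ≤ deltaP (S : Set Γ) s 1 x y := by
    intro x y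
    rw [hdp]
    have := Summable.le_tsum (hsumg x y) 1 (fun ψ _ => by positivity)
    simpa [hf1] using this
  refine ⟨h1, ?_, ?_⟩
  · intro x ε hε
    -- choose a finite set F with small tail
    have htail := tendsto_tsum_compl_atTop_zero (fun ψ => f ψ * D)
    have htail' := (Metric.tendsto_nhds.mp htail (ε / 2) (by linarith)).exists
    obtain ⟨F, hF⟩ := htail'
    have hFtail : ∑' ψ : {ψ : Γ // ψ ∉ F}, f ψ * D < ε / 2 := by
      have h0 : 0 ≤ ∑' ψ : {ψ : Γ // ψ ∉ F}, f ψ * D :=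
        tsum_nonneg fun ψ => by positivity
      have := hF
      rw [Real.dist_eq, sub_zero, abs_of_nonneg h0] at this
      exact this
    -- continuity of the finite part
    set h : X → ℝ := fun y => ∑ ψ ∈ F, f ψ * dist (ψ⁻¹ • x) (ψ⁻¹ • y) with hhdef
    have hcontH : Continuous h := by
      apply continuous_finset_sum
      intro ψ _
      exact continuous_const.mul (Continuous.dist continuous_const (hcont ψ⁻¹))
    have hx0 : h x = 0 := by simp [hhdef]
    obtain ⟨r, hr, hrball⟩ := Metric.continuous_iff.mp hcontH x (ε / 2) (by linarith)
    refine ⟨r, hr, fun y hxy => ?_⟩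
    have hhy : h y < ε / 2 := by
      have := hrball y (by rwa [dist_comm])
      rw [Real.dist_eq, hx0, sub_zero] at this
      exact lt_of_abs_lt this
    have hsplit := Summable.sum_add_tsum_subtype_compl (hsumg x y) F
    rw [hdp, ← hsplit]
    have htail2 : ∑' ψ : {ψ : Γ // ψ ∉ F}, f ψ * dist ((ψ : Γ)⁻¹ • x) ((ψ : Γ)⁻¹ • y)
        ≤ ∑' ψ : {ψ : Γ // ψ ∉ F}, f ψ * D := by
      refine Summable.tsum_le_tsum (fun ψ => ?_) ((hsumg x y).subtype _) (hsumD.subtype _)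
      exact mul_le_mul_of_nonneg_left (hD _ _) (hfpos _).le
    calc ∑ ψ ∈ F, f ψ * dist (ψ⁻¹ • x) (ψ⁻¹ • y)
          + ∑' ψ : {ψ : Γ // ψ ∉ F}, f ψ * dist ((ψ : Γ)⁻¹ • x) ((ψ : Γ)⁻¹ • y)
        < ε / 2 + ε / 2 := by
          exact add_lt_add_of_lt_of_le hhy (le_trans htail2 hFtail.le)
      _ = ε := by ring
  · intro x ε hε
    exact ⟨ε, hε, fun y hy => lt_of_le_of_lt (h1 x y) hy⟩
end
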